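/- Let (β, q) be any equilibrium with GenAI available under a revenue-threshold compensation scheme (v̄, w) with v̄, w ≥ 0. Then the set X_H := {x ∈ X : U^{v̄,w}(x;q) > V^{v̄,w}(g;q)} of creators who strictly prefer manual creation is empty, and the set X_AI := {x ∈ X : U^{v̄,w}(x;q) < V^{v̄,w}(g;q)} of creators who strictly prefer GenAI has positive Lebesgue measure. -/

import Mathlib

open MeasureTheory Real Set Filter Topology
open scoped ENNReal

noncomputable section

namespace GenAIPlatform

/-- `D(X)`: upper-semicontinuous densities on `X` with a positive lower bound. -/
def DSet {d : ℕ} (X : Set (Fin d → ℝ)) : Set ((Fin d → ℝ) → ℝ) :=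
  {q | UpperSemicontinuousOn q X ∧ ∃ ε : ℝ, 0 < ε ∧ ∀ x ∈ X, ε ≤ q x}

/-- `P(X)`: probability densities on `X`. -/
def PSet {d : ℕ} (X : Set (Fin d → ℝ)) : Set ((Fin d → ℝ) → ℝ) :=
  {q | q ∈ DSet X ∧ ∫ x in X, q x = 1}

/-- The revenue `V(y;q)` of content `y` under content density `q`. -/
def Rev {d : ℕ} (p : (Fin d → ℝ) → ℝ) (α γ : ℝ) (q : (Fin d → ℝ) → ℝ)
    (y : Fin d → ℝ) : ℝ :=
  (1 - γ) * (p y / q y) ^ α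

/-- A compensation scheme `W(x;q)`. -/
abbrev Scheme (d : ℕ) := (Fin d → ℝ) → ((Fin d → ℝ) → ℝ) → ℝ

/-- Compensated revenue `V^W(y;q)`. -/
def RevW {d : ℕ} (p : (Fin d → ℝ) → ℝ) (α γ : ℝ) (W : Scheme d)
    (q : (Fin d → ℝ) → ℝ) (y : Fin d → ℝ) : ℝ :=
  Rev p α γ q y + W y q

/-- Profit from manual creation `U^W(x;q)`. -/
def UtilW {d : ℕ} (p : (Fin d → ℝ) → ℝ) (α γ c : ℝ) (W : Scheme d)
    (q : (Fin d → ℝ) → ℝ) (x : Fin d → ℝ) : ℝ :=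
  RevW p α γ W q x - c

/-- Expected compensated revenue from GenAI `V^W(g;q)`. -/
def RevWg {d : ℕ} (X : Set (Fin d → ℝ)) (p g : (Fin d → ℝ) → ℝ) (α γ : ℝ)
    (W : Scheme d) (q : (Fin d → ℝ) → ℝ) : ℝ :=
  ∫ y in X, RevW p α γ W q y * g y

/-- The revenue-threshold compensation scheme `(v, w)`. -/
def Wthr {d : ℕ} (p : (Fin d → ℝ) → ℝ) (α γ v w : ℝ) : Scheme d :=
  fun x q => if v ≤ Rev p α γ q x then w else 0

/-- Platform profit `Π^W(q)` (per consumer). -/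
def Profit {d : ℕ} (X : Set (Fin d → ℝ)) (p : (Fin d → ℝ) → ℝ) (α γ : ℝ)
    (W : Scheme d) (q : (Fin d → ℝ) → ℝ) : ℝ :=
  γ * ∫ x in X, p x ^ α * q x ^ (1 - α) - ∫ x in X, W x q * q x

/-- Mean-field equilibrium with GenAI available: `β` is the GenAI-usage propensity,
`q` the content density. -/
def IsEquilibrium {d : ℕ} (X : Set (Fin d → ℝ)) (p g : (Fin d → ℝ) → ℝ)
    (α γ c : ℝ) (W : Scheme d) (β q : (Fin d → ℝ) → ℝ) : Prop :=
  (∀ x ∈ X, β x ∈ Icc (0 : ℝ) 1) ∧ q ∈ DSet X ∧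
  (∀ x ∈ X, RevWg X p g α γ W q < UtilW p α γ c W q x → β x = 0) ∧
  (∀ x ∈ X, UtilW p α γ c W q x < RevWg X p g α γ W q → β x = 1) ∧
  (∀ x ∈ X, q x = (1 - β x) * p x + g x * ∫ y in X, β y * p y)

lemma usc_restrict_of_uscOn {E : Type*} [TopologicalSpace E] {f : E → ℝ} {s : Set E}
    (hf : UpperSemicontinuousOn f s) : UpperSemicontinuous (s.restrict f) := by
  intro x y hxy
  have h := hf x x.2 y hxy
  rw [nhds_subtype_eq_comap_nhdsWithin]
  exact Filter.eventually_comap.mpr (h.mono (fun a ha b hb => by simp [Set.restrict, hb ▸ ha]))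

lemma aemeasurable_of_uscOn {d : ℕ} {f : (Fin d → ℝ) → ℝ} {X : Set (Fin d → ℝ)}
    (hX : MeasurableSet X) (hf : UpperSemicontinuousOn f X) :
    AEMeasurable f (volume.restrict X) := by
  have hF : Measurable (X.restrict f) := (usc_restrict_of_uscOn hf).measurable
  obtain ⟨f', hf'm, hext⟩ := (MeasurableEmbedding.subtype_coe hX).exists_measurable_extend hF
    (fun _ => ⟨0⟩)
  refine ⟨f', hf'm, ?_⟩
  filter_upwards [ae_restrict_mem hX] with x hx
  have := congrFun hext ⟨x, hx⟩
  simpa [Set.restrict] using this.symm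

lemma exists_bound_of_uscOn {d : ℕ} {f : (Fin d → ℝ) → ℝ} {X : Set (Fin d → ℝ)}
    (hXc : IsCompact X) (hf : UpperSemicontinuousOn f X) :
    ∃ M : ℝ, ∀ x ∈ X, f x ≤ M := by
  have : CompactSpace ↥X := isCompact_iff_compactSpace.mp hXc
  have hF : UpperSemicontinuous (X.restrict f) := usc_restrict_of_uscOn hf
  obtain ⟨t, ht⟩ := IsCompact.elim_finite_subcover (isCompact_univ (X := ↥X))
    (fun n : ℕ => (X.restrict f) ⁻¹' Iio (n : ℝ))
    (fun n => hF.isOpen_preimage _)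
    (by
      intro z _
      obtain ⟨n, hn⟩ := exists_nat_gt (X.restrict f z)
      exact mem_iUnion.mpr ⟨n, hn⟩)
  refine ⟨(t.sup id : ℕ), fun x hx => ?_⟩
  have := ht (mem_univ (⟨x, hx⟩ : ↥X))
  obtain ⟨n, hnt, hn⟩ := mem_iUnion₂.mp this
  have h1 : f x < (n : ℝ) := hn
  have h2 : (n : ℝ) ≤ ((t.sup id : ℕ) : ℝ) := by
    exact_mod_cast Finset.le_sup (f := id) hnt
  linarith

/-- Lemma 5: no creator strictly prefers manual creation; a
positive-measure set strictly prefers GenAI. -/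
theorem stmt8 {d : ℕ} (hd : 1 ≤ d) (X : Set (Fin d → ℝ))
    (hXc : IsCompact X) (hX0 : 0 < volume X)
    (p g : (Fin d → ℝ) → ℝ) (hp : p ∈ PSet X) (hg : g ∈ PSet X)
    (α γ c : ℝ) (hα : α ∈ Ioo (0 : ℝ) 1) (hγ : γ ∈ Icc (0 : ℝ) 1) (hc : 0 < c)
    (v w : ℝ) (hv : 0 ≤ v) (hw : 0 ≤ w)
    (β q : (Fin d → ℝ) → ℝ)
    (heq : IsEquilibrium X p g α γ c (Wthr p α γ v w) β q) :
    {x ∈ X | RevWg X p g α γ (Wthr p α γ v w) q <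
      UtilW p α γ c (Wthr p α γ v w) q x} = ∅ ∧
    0 < volume {x ∈ X | UtilW p α γ c (Wthr p α γ v w) q x <
      RevWg X p g α γ (Wthr p α γ v w) q} := by
  classical
  obtain ⟨hβ01, hqD, hH, hAI, hcons⟩ := heq
  obtain ⟨⟨hp_usc, εp, hεp, hp_lb⟩, hp_int1⟩ := hp
  obtain ⟨⟨hg_usc, εg, hεg, hg_lb⟩, hg_int1⟩ := hg
  obtain ⟨hq_usc, εq, hεq, hq_lb⟩ := hqD
  have hXm : MeasurableSet X := hXc.isClosed.measurableSet
  have h1γ : (0:ℝ) ≤ 1 - γ := by linarith [hγ.2]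
  set Wt := Wthr p α γ v w with hWt
  set Vg := RevWg X p g α γ Wt q with hVgdef
  set B := ∫ y in X, β y * p y with hBdef
  -- basic integrability
  have hg_int : IntegrableOn g X := by
    by_contra h
    rw [MeasureTheory.integral_undef h] at hg_int1
    norm_num at hg_int1
  have hp_int : IntegrableOn p X := by
    by_contra h
    rw [MeasureTheory.integral_undef h] at hp_int1
    norm_num at hp_int1
  have hp_m : AEMeasurable p (volume.restrict X) := aemeasurable_of_uscOn hXm hp_usc
  have hg_m : AEMeasurable g (volume.restrict X) := aemeasurable_of_uscOn hXm hg_usc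
  have hq_m : AEMeasurable q (volume.restrict X) := aemeasurable_of_uscOn hXm hq_usc
  have hβmul : ∀ x ∈ X, β x * p x = p x + g x * B - q x := by
    intro x hx
    linear_combination hcons x hx
  have hB0 : (0:ℝ) ≤ B := by
    rw [hBdef]
    exact setIntegral_nonneg hXm fun y hy =>
      mul_nonneg (hβ01 y hy).1 (le_trans hεp.le (hp_lb y hy))
  have hbd : IntegrableOn (fun y => p y + g y * B) X := by
    exact hp_int.add (hg_int.mul_const B)
  have hq_int : IntegrableOn q X := by
    refine Integrable.mono' hbd hq_m.aestronglyMeasurable ?_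
    filter_upwards [ae_restrict_mem hXm] with y hy
    have h1 : 0 < q y := lt_of_lt_of_le hεq (hq_lb y hy)
    have h2 := hβmul y hy
    have h3 : 0 ≤ β y * p y := mul_nonneg (hβ01 y hy).1 (le_trans hεp.le (hp_lb y hy))
    rw [Real.norm_eq_abs, abs_of_pos h1]
    linarith
  have hh_int : IntegrableOn (fun y => p y + g y * B - q y) X := by
    exact hbd.sub hq_int
  have hB_eq : B = ∫ y in X, (p y + g y * B - q y) := by
    rw [hBdef]
    exact setIntegral_congr_fun hXm fun y hy => hβmul y hy
  -- measurability of RevW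
  have hR_m : AEMeasurable (fun y => Rev p α γ q y) (volume.restrict X) := by
    have : (fun y => Rev p α γ q y) = fun y => (1 - γ) * (p y / q y) ^ α := rfl
    rw [this]
    exact aemeasurable_const.mul
      ((Real.continuous_rpow_const hα.1.le).measurable.comp_aemeasurable (hp_m.div hq_m))
  have hRW_m : AEMeasurable (fun y => RevW p α γ Wt q y) (volume.restrict X) := by
    obtain ⟨R', hR'm, hRae⟩ := hR_m
    refine ⟨fun y => R' y + (if v ≤ R' y then w else 0),
      hR'm.add (Measurable.ite (measurableSet_le measurable_const hR'm)
        measurable_const measurable_const), ?_⟩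
    filter_upwards [hRae] with y hy
    simp only [RevW, hWt, Wthr, hy]
  -- bound on RevW
  obtain ⟨Mp, hMp⟩ := exists_bound_of_uscOn hXc hp_usc
  set CR := (1 - γ) * (Mp / εq) ^ α + w with hCR
  have hRW_bounds : ∀ y ∈ X, 0 ≤ RevW p α γ Wt q y ∧ RevW p α γ Wt q y ≤ CR := by
    intro y hy
    have hpy : 0 ≤ p y := le_trans hεp.le (hp_lb y hy)
    have hqy : 0 < q y := lt_of_lt_of_le hεq (hq_lb y hy)
    have hMp0 : 0 ≤ Mp := le_trans hpy (hMp y hy)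
    have hdiv : 0 ≤ p y / q y := div_nonneg hpy hqy.le
    have hdiv2 : p y / q y ≤ Mp / εq := div_le_div₀ hMp0 (hMp y hy) hεq (hq_lb y hy)
    have hrpow : (p y / q y) ^ α ≤ (Mp / εq) ^ α := Real.rpow_le_rpow hdiv hdiv2 hα.1.le
    have hrpow0 : 0 ≤ (p y / q y) ^ α := Real.rpow_nonneg hdiv α
    have hite0 : 0 ≤ (if v ≤ Rev p α γ q y then w else 0) := by
      split_ifs <;> simp [hw]
    have hitew : (if v ≤ Rev p α γ q y then w else 0) ≤ w := by
      split_ifs <;> simp [hw]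
    constructor
    · simp only [RevW, hWt, Wthr, Rev]
      have : 0 ≤ (1 - γ) * (p y / q y) ^ α := mul_nonneg h1γ hrpow0
      simp only [Rev] at hite0
      linarith
    · simp only [RevW, hWt, Wthr, Rev, hCR]
      have : (1 - γ) * (p y / q y) ^ α ≤ (1 - γ) * (Mp / εq) ^ α :=
        mul_le_mul_of_nonneg_left hrpow h1γ
      simp only [Rev] at hitew
      linarith
  have hF_int : IntegrableOn (fun y => RevW p α γ Wt q y * g y) X := by
    refine Integrable.mono' (hg_int.const_mul CR) (hRW_m.mul hg_m).aestronglyMeasurable ?_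
    filter_upwards [ae_restrict_mem hXm] with y hy
    have hgy : 0 ≤ g y := le_trans hεg.le (hg_lb y hy)
    obtain ⟨h0, h1⟩ := hRW_bounds y hy
    rw [Real.norm_eq_abs, abs_of_nonneg (mul_nonneg h0 hgy)]
    exact mul_le_mul_of_nonneg_right h1 hgy
  have hVg' : Vg = ∫ y in X, RevW p α γ Wt q y * g y := hVgdef
  -- Part 2: positive measure of the AI-preferring set
  have hSpos : 0 < volume {x ∈ X | UtilW p α γ c Wt q x < Vg} := by
    rw [pos_iff_ne_zero]
    intro hS0
    have hae : ∀ᵐ y ∂(volume.restrict X), Vg + c ≤ RevW p α γ Wt q y := by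
      rw [ae_iff, Measure.restrict_apply' hXm]
      have hsub : {y | ¬ Vg + c ≤ RevW p α γ Wt q y} ∩ X ⊆
          {x ∈ X | UtilW p α γ c Wt q x < Vg} := by
        rintro y ⟨hy1, hy2⟩
        rw [mem_setOf_eq, not_le] at hy1
        refine ⟨hy2, ?_⟩
        simp only [UtilW]
        linarith
      exact le_antisymm (le_trans (measure_mono hsub) (le_of_eq hS0)) zero_le
    have hmono : ∫ y in X, (Vg + c) * g y ≤ ∫ y in X, RevW p α γ Wt q y * g y := by
      refine integral_mono_ae (hg_int.const_mul (Vg + c)) hF_int ?_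
      filter_upwards [hae, ae_restrict_mem hXm] with y h1 h2
      exact mul_le_mul_of_nonneg_right h1 (le_trans hεg.le (hg_lb y h2))
    rw [integral_const_mul, hg_int1, mul_one, ← hVg'] at hmono
    linarith
  -- B > 0
  have hB_pos : (0:ℝ) < B := by
    rcases hB0.lt_or_eq with h | h
    · exact h
    · exfalso
      have hzero : ∫ y in X, (p y + g y * B - q y) = 0 := by rw [← hB_eq, ← h]
      have hae0 : (fun y => p y + g y * B - q y) =ᵐ[volume.restrict X] 0 := by
        refine (integral_eq_zero_iff_of_nonneg_ae ?_ hh_int).mp hzero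
        filter_upwards [ae_restrict_mem hXm] with y hy
        have h2 := hβmul y hy
        have h3 : 0 ≤ β y * p y := mul_nonneg (hβ01 y hy).1 (le_trans hεp.le (hp_lb y hy))
        simp only [Pi.zero_apply]
        linarith
      have hae0' : ∀ᵐ y ∂(volume.restrict X), p y + g y * B - q y = 0 :=
        hae0.mono fun y hy => by simpa using hy
      rw [ae_iff, Measure.restrict_apply' hXm] at hae0'
      have hsub : {x ∈ X | UtilW p α γ c Wt q x < Vg} ⊆
          {y | ¬ (p y + g y * B - q y = 0)} ∩ X := by
        rintro y ⟨hyX, hyU⟩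
        have hb1 : β y = 1 := hAI y hyX hyU
        have h2 := hβmul y hyX
        have hpy : 0 < p y := lt_of_lt_of_le hεp (hp_lb y hyX)
        refine ⟨?_, hyX⟩
        simp only [mem_setOf_eq]
        rw [hb1] at h2
        intro h0
        rw [h0] at h2
        linarith
      have := le_antisymm (le_trans (measure_mono hsub) (le_of_eq hae0')) zero_le
      exact hSpos.ne' this
  -- Step 4: a point with positive β and g*B ≤ β*p
  have hstep4 : ∃ y ∈ X, 0 < β y ∧ g y * B ≤ β y * p y := by
    by_contra hcon
    push_neg at hcon
    have hstrict : ∀ y ∈ X, 0 < g y * B - (p y + g y * B - q y) := by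
      intro y hy
      have hb := hβmul y hy
      rcases (hβ01 y hy).1.lt_or_eq with hb0 | hb0
      · have := hcon y hy hb0
        linarith
      · have hg0 : 0 < g y * B := mul_pos (lt_of_lt_of_le hεg (hg_lb y hy)) hB_pos
        have : (0:ℝ) = β y * p y := by rw [← hb0]; ring
        linarith
    have hpos : 0 < ∫ y in X, (g y * B - (p y + g y * B - q y)) := by
      rw [setIntegral_pos_iff_support_of_nonneg_ae ?_ ?_]
      · refine lt_of_lt_of_le hX0 (measure_mono ?_)
        intro y hy
        exact ⟨(hstrict y hy).ne', hy⟩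
      · filter_upwards [ae_restrict_mem hXm] with y hy
        exact (hstrict y hy).le
      · exact (hg_int.mul_const B).sub hh_int

    have hcalc : ∫ y in X, (g y * B - (p y + g y * B - q y)) = 0 := by
      rw [integral_sub (hg_int.mul_const B) hh_int, ← hB_eq, integral_mul_const, hg_int1]
      ring
    linarith
  -- Part 1: no one strictly prefers manual creation
  refine ⟨?_, hSpos⟩
  rw [eq_empty_iff_forall_notMem]
  rintro x₀ ⟨hx₀X, hx₀U⟩
  obtain ⟨y, hyX, hyβ, hygB⟩ := hstep4
  have hyU : UtilW p α γ c Wt q y ≤ Vg := by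
    by_contra h
    push_neg at h
    exact hyβ.ne' (hH y hyX h)
  have hβx0 : β x₀ = 0 := hH x₀ hx₀X hx₀U
  have hq0 : q x₀ = p x₀ + g x₀ * B := by
    have h2 := hcons x₀ hx₀X
    rw [hβx0] at h2
    linear_combination h2
  have hp0 : 0 < p x₀ := lt_of_lt_of_le hεp (hp_lb x₀ hx₀X)
  have hgB0 : 0 ≤ g x₀ * B := mul_nonneg (le_trans hεg.le (hg_lb x₀ hx₀X)) hB0
  have hq0pos : 0 < q x₀ := by rw [hq0]; linarith
  have hRx : Rev p α γ q x₀ ≤ 1 - γ := by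
    have hr1 : p x₀ / q x₀ ≤ 1 := (div_le_one hq0pos).mpr (by rw [hq0]; linarith)
    have hr0 : 0 ≤ p x₀ / q x₀ := div_nonneg hp0.le hq0pos.le
    have h3 := Real.rpow_le_one hr0 hr1 hα.1.le
    calc Rev p α γ q x₀ = (1 - γ) * (p x₀ / q x₀) ^ α := rfl
      _ ≤ (1 - γ) * 1 := mul_le_mul_of_nonneg_left h3 h1γ
      _ = 1 - γ := mul_one _
  have hqy_le : q y ≤ p y := by
    have h2 : q y = p y - β y * p y + g y * B := by linear_combination hcons y hyX
    linarith
  have hqypos : 0 < q y := lt_of_lt_of_le hεq (hq_lb y hyX)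
  have hRy : 1 - γ ≤ Rev p α γ q y := by
    have hr1 : 1 ≤ p y / q y := (one_le_div hqypos).mpr hqy_le
    have h3 : (1:ℝ) ≤ (p y / q y) ^ α := by
      calc (1:ℝ) = 1 ^ α := (Real.one_rpow α).symm
        _ ≤ (p y / q y) ^ α := Real.rpow_le_rpow zero_le_one hr1 hα.1.le
    calc 1 - γ = (1 - γ) * 1 := (mul_one _).symm
      _ ≤ (1 - γ) * (p y / q y) ^ α := mul_le_mul_of_nonneg_left h3 h1γ
      _ = Rev p α γ q y := rfl
  have hWle : Wt x₀ q ≤ Wt y q := by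
    simp only [hWt, Wthr]
    split_ifs with h1 h2
    · exact le_refl w
    · exact absurd (le_trans h1 (le_trans hRx hRy)) h2
    · exact hw
    · exact le_refl 0
  have hUle : UtilW p α γ c Wt q x₀ ≤ UtilW p α γ c Wt q y := by
    simp only [UtilW, RevW]
    have := le_trans hRx hRy
    linarith
  linarith

end GenAIPlatform
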